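/- For a simple digraph D, every singleton {v} with v ∈ V(D) is a zero forcing set if and only if D is a directed cycle. -/

import Mathlib

/-- The set of out-neighbors of `v` in the digraph with arc relation `A`. -/
def Nout {V : Type} (A : V → V → Prop) (v : V) : Set V := {w | A v w}

/-- The set of in-neighbors of `v`. -/
def Nin {V : Type} (A : V → V → Prop) (v : V) : Set V := {w | A w v}

/-- One application of the color change rule to the set `S` of filled vertices. -/
def Bstep {V : Type} (A : V → V → Prop) (S : Set V) : Set V :=
  S ∪ {w | ∃ v ∈ S, Nout A v \ S = {w}}

/-- `S` is a zero forcing set: iterating the color change rule fills all vertices. -/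
def IsZFS {V : Type} (A : V → V → Prop) (S : Set V) : Prop :=
  ∃ t, (Bstep A)^[t] S = Set.univ

/-- The failed zero forcing number: the maximum cardinality of a failed zero forcing set. -/
noncomputable def Fnum {V : Type} (A : V → V → Prop) : ℕ :=
  sSup {k | ∃ S : Set V, ¬ IsZFS A S ∧ S.ncard = k}

/-- The zero forcing number: the minimum cardinality of a zero forcing set. -/
noncomputable def Znum {V : Type} (A : V → V → Prop) : ℕ :=
  sInf {k | ∃ S : Set V, IsZFS A S ∧ S.ncard = k}

/-- `W` is a critical set: `W` is nonempty and no vertex outside `W` has exactly one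
out-neighbor in `W`. -/
def IsCritical {V : Type} (A : V → V → Prop) (W : Set V) : Prop :=
  W.Nonempty ∧ ∀ v ∈ Wᶜ, (Nout A v ∩ W).ncard ≠ 1

/-- `D` is a directed cycle: either a single vertex with no arcs, or the vertices can be
cyclically labeled so that the arcs are exactly the consecutive ones. -/
def IsDirectedCycle {V : Type} [Fintype V] (A : V → V → Prop) : Prop :=
  (Fintype.card V = 1 ∧ ∀ u v : V, ¬ A u v) ∨
  (2 ≤ Fintype.card V ∧ ∃ e : ZMod (Fintype.card V) ≃ V,
      ∀ i j : ZMod (Fintype.card V), A (e i) (e j) ↔ j = i + 1)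

lemma Bstep_subset {V : Type} (A : V → V → Prop) (S : Set V) : S ⊆ Bstep A S :=
  Set.subset_union_left

lemma Bstep_fixed {V : Type} (A : V → V → Prop) {S : Set V} (h : Bstep A S = S) :
    ∀ t, (Bstep A)^[t] S = S := by
  intro t; induction t with
  | zero => rfl
  | succ t ih => rw [Function.iterate_succ_apply', ih, h]

lemma orbit_sub {V : Type} (A : V → V → Prop) (f : V → V)
    (hf : ∀ v, Nout A v = {f v}) (v : V) :
    ∀ t, (Bstep A)^[t] {v} ⊆ {w | ∃ k, f^[k] v = w} := by
  intro t; induction t with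
  | zero =>
      intro w hw; rcases hw with rfl; exact ⟨0, rfl⟩
  | succ t ih =>
      rw [Function.iterate_succ_apply']
      intro w hw
      rcases hw with hw | ⟨u, hu, hset⟩
      · exact ih hw
      · have huo := ih hu
        rcases huo with ⟨k, rfl⟩
        have : w ∈ Nout A (f^[k] v) := by
          have : w ∈ Nout A (f^[k] v) \ (Bstep A)^[t] {v} := hset ▸ rfl
          exact this.1
        rw [hf] at this
        exact ⟨k + 1, by rw [Function.iterate_succ_apply']; exact this.symm ▸ rfl⟩

lemma bij_of_orbits {V : Type} [Fintype V] (f : V → V)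
    (hsurj : ∀ v w : V, ∃ k, f^[k] v = w) :
    Function.Bijective f := by
  have hsf : Function.Surjective f := by
    intro v
    obtain ⟨m, hm⟩ := hsurj (f v) v
    refine ⟨f^[m] v, ?_⟩
    rw [← Function.iterate_succ_apply' f m v, Function.iterate_succ_apply]
    exact hm
  exact ⟨Finite.injective_iff_surjective.mpr hsf, hsf⟩

lemma iter_mod {V : Type} (f : V → V) (v0 : V) {p : ℕ} (hp : 0 < p)
    (hperiod : f^[p] v0 = v0) : ∀ k, f^[k] v0 = f^[k % p] v0 := by
  intro k
  induction k using Nat.strong_induction_on with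
  | _ k ih =>
    by_cases hk : k < p
    · rw [Nat.mod_eq_of_lt hk]
    · push_neg at hk
      have h1 : k = (k - p) + p := by omega
      rw [h1, Function.iterate_add_apply, hperiod, ih (k - p) (by omega)]
      congr 1
      rw [Nat.add_mod_right]

theorem stmt_7 {V : Type} [Fintype V] [Nonempty V] (A : V → V → Prop)
    (hA : Irreflexive A) :
    (∀ v : V, IsZFS A {v}) ↔ IsDirectedCycle A := by
  classical
  set n := Fintype.card V with hn
  have hn1 : 1 ≤ n := Fintype.card_pos
  constructor
  · intro hZ
    by_cases hcard : n = 1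
    · left
      refine ⟨hcard, fun u v huv => ?_⟩
      have : Subsingleton V := Fintype.card_le_one_iff_subsingleton.mp (le_of_eq hcard)
      have : u = v := Subsingleton.elim u v
      exact hA u (this ▸ huv)
    · right
      have hn2 : 2 ≤ n := by omega
      -- every vertex has exactly one out-neighbor
      have hout : ∀ v : V, ∃ w, Nout A v = {w} := by
        intro v
        obtain ⟨t, ht⟩ := hZ v
        have hne : Bstep A {v} ≠ {v} := by
          intro hfix
          have := Bstep_fixed A hfix t
          rw [ht] at this
          obtain ⟨u, hu⟩ := Fintype.exists_ne_of_one_lt_card (by omega) v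
          have : u ∈ ({v} : Set V) := this ▸ Set.mem_univ u
          exact hu this
        have hss : ({v} : Set V) ⊂ Bstep A {v} :=
          (Bstep_subset A {v}).ssubset_of_ne (Ne.symm hne)
        obtain ⟨x, hx, hxv⟩ := Set.exists_of_ssubset hss
        rcases hx with hx | ⟨u, hu, hset⟩
        · exact absurd hx hxv
        · rcases hu with rfl
          refine ⟨x, ?_⟩
          have hv : u ∉ Nout A u := hA u
          rw [← hset]
          ext w
          simp only [Set.mem_diff, Set.mem_singleton_iff]
          constructor
          · intro hw; exact ⟨hw, fun h => hv (h ▸ hw)⟩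
          · intro hw; exact hw.1
      choose f hf using hout
      -- orbit covering
      have hsurj : ∀ v w : V, ∃ k, f^[k] v = w := by
        intro v w
        obtain ⟨t, ht⟩ := hZ v
        exact orbit_sub A f hf v t (ht ▸ Set.mem_univ w)
      have hbij := bij_of_orbits f hsurj
      -- minimal period of an arbitrary vertex
      obtain ⟨v0⟩ := (inferInstance : Nonempty V)
      have hexp : ∃ p, 0 < p ∧ f^[p] v0 = v0 := by
        obtain ⟨m, hm⟩ := hsurj (f v0) v0
        refine ⟨m + 1, Nat.succ_pos m, ?_⟩
        rw [Function.iterate_succ_apply]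
        exact hm
      set p := Nat.find hexp with hpdef
      obtain ⟨hp0, hpp⟩ := Nat.find_spec hexp
      have hinj_lt : ∀ a b : ℕ, a < p → b < p → f^[a] v0 = f^[b] v0 → a = b := by
        have key : ∀ a b : ℕ, a ≤ b → b < p → f^[a] v0 = f^[b] v0 → a = b := by
          intro a b hab hbp heq
          by_contra hne
          have hlt : 0 < b - a := by omega
          have : f^[a] (f^[b - a] v0) = f^[a] v0 := by
            rw [← Function.iterate_add_apply]
            rw [show a + (b - a) = b by omega]
            exact heq.symm
          have hfix : f^[b - a] v0 = v0 := (hbij.1.iterate a) this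
          exact Nat.find_min hexp (by omega : b - a < p) ⟨hlt, hfix⟩
        intro a b ha hb heq
        rcases le_total a b with h | h
        · exact key a b h hb heq
        · exact (key b a h ha heq.symm).symm
      have hmod := iter_mod f v0 hp0 hpp
      -- p = n
      have hpn : p = n := by
        have hle : p ≤ n := by
          have : Function.Injective (fun k : Fin p => f^[(k : ℕ)] v0) := by
            intro a b hab
            exact Fin.ext (hinj_lt a b a.isLt b.isLt hab)
          simpa using Fintype.card_le_of_injective _ this
        have hge : n ≤ p := by
          have : Function.Surjective (fun k : Fin p => f^[(k : ℕ)] v0) := by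
            intro w
            obtain ⟨k, hk⟩ := hsurj v0 w
            exact ⟨⟨k % p, Nat.mod_lt k hp0⟩, by show f^[k % p] v0 = w; rw [← hmod k]; exact hk⟩
          simpa using Fintype.card_le_of_surjective _ this
        omega
      haveI : NeZero n := ⟨by omega⟩
      -- build the equivalence
      have hperiod_n : f^[n] v0 = v0 := hpn ▸ hpp
      have hmodn : ∀ k, f^[k] v0 = f^[k % n] v0 := iter_mod f v0 (by omega) hperiod_n
      have hbije : Function.Bijective (fun i : ZMod n => f^[(ZMod.val i)] v0) := by
        constructor
        · intro i j hij
          have := hinj_lt i.val j.val (by rw [hpn]; exact i.val_lt) (by rw [hpn]; exact j.val_lt) hij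
          exact ZMod.val_injective n this
        · intro w
          obtain ⟨k, hk⟩ := hsurj v0 w
          refine ⟨(k : ZMod n), ?_⟩
          simp only [ZMod.val_natCast]
          rw [← hmodn k]
          exact hk
      set e := Equiv.ofBijective _ hbije with hedef
      refine ⟨hn2, e, ?_⟩
      have hstep : ∀ i : ZMod n, e (i + 1) = f (e i) := by
        intro i
        show f^[(i + 1).val] v0 = f (f^[i.val] v0)
        haveI : Fact (1 < n) := ⟨by omega⟩
        have h1 : (1 : ZMod n).val = 1 := ZMod.val_one n
        rw [ZMod.val_add, h1, ← hmodn (i.val + 1), Function.iterate_succ_apply']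
      intro i j
      constructor
      · intro hij
        have : e j ∈ Nout A (e i) := hij
        rw [hf] at this
        have : e j = e (i + 1) := by rw [hstep]; exact this
        exact e.injective this
      · intro hij
        subst hij
        have : e (i + 1) ∈ Nout A (e i) := by rw [hf, hstep]; rfl
        exact this
  · intro hcyc v
    rcases hcyc with ⟨hcard, hnoarc⟩ | ⟨hn2, e, he⟩
    · refine ⟨0, ?_⟩
      have : Subsingleton V := Fintype.card_le_one_iff_subsingleton.mp (le_of_eq hcard)
      ext w
      simp [Subsingleton.elim w v]
    · haveI : NeZero n := ⟨by omega⟩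
      set i0 := e.symm v with hi0
      have hv : e i0 = v := e.apply_symm_apply v
      have key : ∀ t : ℕ, ∀ k : ℕ, k ≤ t → e (i0 + (k : ZMod n)) ∈ (Bstep A)^[t] {v} := by
        intro t
        induction t with
        | zero =>
            intro k hk
            interval_cases k
            simp [hv]
        | succ t ih =>
            intro k hk
            rw [Function.iterate_succ_apply']
            rcases Nat.lt_or_ge k (t + 1) with hkt | hkt
            · exact Bstep_subset A _ (ih k (by omega))
            · have hk1 : k = t + 1 := by omega
              subst hk1
              set X := (Bstep A)^[t] {v} with hX
              by_cases hmem : e (i0 + ((t + 1 : ℕ) : ZMod n)) ∈ X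
              · exact Bstep_subset A X hmem
              · right
                refine ⟨e (i0 + (t : ZMod n)), ih t le_rfl, ?_⟩
                have hcast : ((t + 1 : ℕ) : ZMod n) = (t : ZMod n) + 1 := by push_cast; ring
                ext w
                simp only [Set.mem_diff, Set.mem_singleton_iff]
                constructor
                · rintro ⟨hw, hwX⟩
                  have : A (e (i0 + (t : ZMod n))) (e (e.symm w)) := by
                    rwa [e.apply_symm_apply]
                  rw [he] at this
                  rw [← e.apply_symm_apply w, this, hcast]
                  ring_nf
                · rintro rfl
                  refine ⟨?_, hmem⟩
                  show A (e (i0 + (t : ZMod n))) (e (i0 + ((t + 1 : ℕ) : ZMod n)))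
                  rw [he, hcast]
                  ring
      refine ⟨n - 1, ?_⟩
      ext w
      simp only [Set.mem_univ, iff_true]
      have hw : w = e (i0 + ((ZMod.val (e.symm w - i0) : ℕ) : ZMod n)) := by
        rw [ZMod.natCast_val, ZMod.cast_id]
        rw [show i0 + (e.symm w - i0) = e.symm w by ring, e.apply_symm_apply]
      rw [hw]
      exact key (n - 1) _ (by have := (e.symm w - i0).val_lt; omega)
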